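/- Let p ≥ 1, ε > 0, and let N be a monotone norm on ℝⁿ that is differentiable at every point of the nonnegative orthant except the origin and is p-supermodular. Then for all x, y ∈ ℝⁿ with nonnegative coordinates such that N(x) > (p−1)/ε and x ≠ 0, the gradients satisfy coordinatewise: ∂_i N(x+y) ≥ exp(−ε·N(y))·∂_i N(x) for every i ∈ {1,…,n}. -/

import Mathlib

noncomputable section

/-- A monotone norm on ℝⁿ: subadditive, absolutely homogeneous, point-separating, and
monotone on the nonnegative orthant. -/
def IsMonotoneNorm {n : ℕ} (N : (Fin n → ℝ) → ℝ) : Prop :=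
  (∀ x y, N (x + y) ≤ N x + N y) ∧
  (∀ (c : ℝ) (x), N (c • x) = |c| * N x) ∧
  (∀ x, N x = 0 → x = 0) ∧
  (∀ x y : Fin n → ℝ, 0 ≤ x → x ≤ y → N x ≤ N y)

/-- `N` is `p`-supermodular: `N(u+v+w)^p − N(u+v)^p ≥ N(u+w)^p − N(u)^p` for all
nonnegative `u, v, w`. -/
def IsPSupermodular {n : ℕ} (N : (Fin n → ℝ) → ℝ) (p : ℝ) : Prop :=
  ∀ u v w : Fin n → ℝ, 0 ≤ u → 0 ≤ v → 0 ≤ w →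
    N (u + w) ^ p - N u ^ p ≤ N (u + v + w) ^ p - N (u + v) ^ p

open Filter Real in
/-- If `φ t - φ 0 ≤ ψ t - ψ 0` for all `t ≥ 0` and both are differentiable at `0`,
then the derivatives compare. -/
lemma deriv_le_of_slope_le {φ ψ : ℝ → ℝ} {a b : ℝ}
    (hφ : HasDerivAt φ a 0) (hψ : HasDerivAt ψ b 0)
    (h : ∀ t : ℝ, 0 ≤ t → φ t - φ 0 ≤ ψ t - ψ 0) : a ≤ b := by
  have hg : HasDerivAt (fun t => φ t - ψ t) (a - b) 0 := hφ.sub hψ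
  have hsub : Set.Ioi (0:ℝ) ⊆ {(0:ℝ)}ᶜ := fun t ht => ne_of_gt ht
  have hten : Tendsto (slope (fun t => φ t - ψ t) 0) (nhdsWithin 0 (Set.Ioi 0)) (nhds (a - b)) :=
    (hasDerivAt_iff_tendsto_slope.mp hg).mono_left (nhdsWithin_mono _ hsub)
  have hle : a - b ≤ 0 := by
    refine le_of_tendsto hten ?_
    filter_upwards [self_mem_nhdsWithin] with t ht
    have ht' : (0:ℝ) < t := ht
    have hnum : (φ t - ψ t) - (φ 0 - ψ 0) ≤ 0 := by
      have := h t ht'.le; linarith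
    have : slope (fun t => φ t - ψ t) 0 t = ((φ t - ψ t) - (φ 0 - ψ 0)) / (t - 0) := by
      simp [slope, div_eq_inv_mul]
    rw [this]
    apply div_nonpos_of_nonpos_of_nonneg hnum (by linarith)
  linarith

theorem pSupermodular_gradient_stable {n : ℕ} (p ε : ℝ) (hp : 1 ≤ p) (hε : 0 < ε)
    (N : (Fin n → ℝ) → ℝ) (hN : IsMonotoneNorm N)
    (hdiff : ∀ x : Fin n → ℝ, 0 ≤ x → x ≠ 0 → DifferentiableAt ℝ N x)
    (hsup : IsPSupermodular N p)
    (x y : Fin n → ℝ) (hx : 0 ≤ x) (hy : 0 ≤ y) (hx0 : x ≠ 0)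
    (hbig : (p - 1) / ε < N x) :
    ∀ i : Fin n,
      Real.exp (-(ε * N y)) * fderiv ℝ N x (Pi.single i 1) ≤
        fderiv ℝ N (x + y) (Pi.single i 1) := by
  obtain ⟨hsubadd, hhom, hsep, hmono⟩ := hN
  have hN0 : N 0 = 0 := by
    have := hhom 0 0; simpa using this
  have hNnonneg : ∀ z, 0 ≤ N z := by
    intro z
    have h1 : N (z + (-1 : ℝ) • z) ≤ N z + N ((-1 : ℝ) • z) := hsubadd _ _
    have h2 : N ((-1 : ℝ) • z) = N z := by rw [hhom]; simp
    have h3 : z + (-1 : ℝ) • z = 0 := by simp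
    rw [h3, hN0, h2] at h1; linarith
  have hεp : 0 ≤ (p - 1) / ε := div_nonneg (by linarith) hε.le
  have hA : 0 < N x := lt_of_le_of_lt hεp hbig
  have hxy_nonneg : (0 : Fin n → ℝ) ≤ x + y := by
    intro j; exact add_nonneg (hx j) (hy j)
  have hAB : N x ≤ N (x + y) := hmono x (x + y) hx (le_add_of_nonneg_right hy)
  have hB : 0 < N (x + y) := lt_of_lt_of_le hA hAB
  have hxy0 : x + y ≠ 0 := by
    intro h; rw [h, hN0] at hB; exact lt_irrefl 0 hB
  have hC : 0 ≤ N y := hNnonneg y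
  have hBle : N (x + y) ≤ N x + N y := hsubadd x y
  intro i
  set e : Fin n → ℝ := Pi.single i 1 with he
  have he0 : (0 : Fin n → ℝ) ≤ e := by
    intro j
    rw [he, Pi.single_apply]
    split_ifs <;> norm_num
  -- directional derivative of N at a point z of the nonneg orthant
  have hdir : ∀ z : Fin n → ℝ, 0 ≤ z → z ≠ 0 →
      HasDerivAt (fun h : ℝ => N (z + h • e)) (fderiv ℝ N z e) 0 := by
    intro z hz hz0
    have hf : HasFDerivAt N (fderiv ℝ N z) z := (hdiff z hz hz0).hasFDerivAt
    have hg : HasDerivAt (fun h : ℝ => z + h • e) e 0 := by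
      simpa using ((hasDerivAt_id (0 : ℝ)).smul_const e).const_add z
    have hf' : HasFDerivAt N (fderiv ℝ N z) ((fun h : ℝ => z + h • e) 0) := by
      simpa using hf
    exact hf'.comp_hasDerivAt 0 hg
  set Dx := fderiv ℝ N x e with hDx
  set Dxy := fderiv ℝ N (x + y) e with hDxy
  -- nonnegativity of the directional derivative
  have hD0 : 0 ≤ Dx := by
    refine deriv_le_of_slope_le (hasDerivAt_const 0 (N x)) (hdir x hx hx0) ?_
    intro t ht
    have hx_le : x ≤ x + t • e := le_add_of_nonneg_right (smul_nonneg ht he0)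
    have := hmono x (x + t • e) hx hx_le
    simp only [zero_smul, add_zero]
    linarith
  -- derivatives of the p-th powers
  have hφ : HasDerivAt (fun h : ℝ => N (x + h • e) ^ p)
      (Dx * p * N x ^ (p - 1)) 0 := by
    have := (hdir x hx hx0).rpow_const (p := p) (Or.inr hp)
    simpa using this
  have hψ : HasDerivAt (fun h : ℝ => N (x + y + h • e) ^ p)
      (Dxy * p * N (x + y) ^ (p - 1)) 0 := by
    have := (hdir (x + y) hxy_nonneg hxy0).rpow_const (p := p) (Or.inr hp)
    simpa using this
  -- supermodularity gives the slope comparison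
  have hkey : Dx * p * N x ^ (p - 1) ≤ Dxy * p * N (x + y) ^ (p - 1) := by
    refine deriv_le_of_slope_le hφ hψ ?_
    intro t ht
    have h1 := hsup x y (t • e) hx hy (smul_nonneg ht he0)
    simpa using h1
  have hp0 : (0 : ℝ) < p := by linarith
  have h2 : N x ^ (p - 1) * Dx ≤ N (x + y) ^ (p - 1) * Dxy := by
    nlinarith [hkey]
  -- the scalar inequality:  exp(-ε N y) * N(x+y)^(p-1) ≤ N(x)^(p-1)
  have hkey2 : Real.exp (-(ε * N y)) * N (x + y) ^ (p - 1) ≤ N x ^ (p - 1) := by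
    rw [Real.exp_neg]
    rw [inv_mul_le_iff₀ (Real.exp_pos _)]
    have hstep1 : N (x + y) ^ (p - 1) ≤ (N x + N y) ^ (p - 1) :=
      Real.rpow_le_rpow hB.le hBle (by linarith)
    have hstep2 : (N x + N y) ^ (p - 1) ≤ Real.exp (ε * N y) * N x ^ (p - 1) := by
      have hfrac : (0 : ℝ) < (N x + N y) / N x := div_pos (by linarith) hA
      have hsplit : (N x + N y) ^ (p - 1) = ((N x + N y) / N x) ^ (p - 1) * N x ^ (p - 1) := by
        rw [← Real.mul_rpow hfrac.le hA.le, div_mul_cancel₀]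
        exact ne_of_gt hA
      rw [hsplit]
      have hlog : ((N x + N y) / N x) ^ (p - 1) ≤ Real.exp (ε * N y) := by
        rw [Real.rpow_def_of_pos hfrac]
        apply Real.exp_le_exp.mpr
        have hlog1 : Real.log ((N x + N y) / N x) ≤ N y / N x := by
          have := Real.log_le_sub_one_of_pos hfrac
          have heq : (N x + N y) / N x - 1 = N y / N x := by
            field_simp
            ring
          linarith [heq ▸ this]
        have hmul : Real.log ((N x + N y) / N x) * (p - 1) ≤ (N y / N x) * (p - 1) :=
          mul_le_mul_of_nonneg_right hlog1 (by linarith)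
        have hlt : p - 1 < ε * N x := by
          have := (div_lt_iff₀ hε).mp hbig
          linarith
        have hfin : (N y / N x) * (p - 1) ≤ ε * N y := by
          rw [div_mul_eq_mul_div, div_le_iff₀ hA]
          nlinarith [hC, hA, hlt]
        linarith
      exact mul_le_mul_of_nonneg_right hlog (Real.rpow_nonneg hA.le _)
    linarith
  have hB' : 0 < N (x + y) ^ (p - 1) := Real.rpow_pos_of_pos hB _
  have h3 : Real.exp (-(ε * N y)) * Dx * N (x + y) ^ (p - 1)
      ≤ Dxy * N (x + y) ^ (p - 1) := by
    have h4 := mul_le_mul_of_nonneg_right hkey2 hD0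
    nlinarith [h2, h4]
  exact le_of_mul_le_mul_right h3 hB'
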